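/- Let K ≥ 1 and, for each k ∈ {1,…,K}, let ϖ_k, L_k, c_k, R_k, f_k^l be positive real numbers. Then the function F : ℝ^K → ℝ defined by F(f) = Σ_{k=1}^K ϖ_k·(L_k·c_k²·R_k + L_k·c_k·f_k) / ( f_k·f_k^l + c_k·R_k·(f_k + f_k^l) ) is convex on the nonnegative orthant { f ∈ ℝ^K : f_k ≥ 0 for all k }. -/

import Mathlib

open Set Finset

private lemma convexOn_sum_fun {ι E : Type*} [AddCommGroup E] [Module ℝ E]
    (t : Finset ι) {s : Set E} (hs : Convex ℝ s) (f : ι → E → ℝ)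
    (h : ∀ i ∈ t, ConvexOn ℝ s (f i)) :
    ConvexOn ℝ s (fun x => ∑ i ∈ t, f i x) := by
  classical
  induction t using Finset.induction with
  | empty => simpa using convexOn_const (0 : ℝ) hs
  | @insert a u hi ih =>
    simp only [Finset.sum_insert hi]
    exact (h a (Finset.mem_insert_self a u)).add
      (ih fun i hiu => h i (Finset.mem_insert_of_mem hiu))

private lemma convexOn_inv_affine {d e : ℝ} (hd : 0 < d) (he : 0 < e) :
    ConvexOn ℝ (Set.Ici (0:ℝ)) (fun x : ℝ => (d * x + e)⁻¹) := by
  have hzpow : ConvexOn ℝ (Set.Ioi (0:ℝ)) fun x : ℝ => x ^ (-1 : ℤ) :=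
    (strictConvexOn_zpow (by norm_num) (by norm_num)).convexOn
  have hinv : ConvexOn ℝ (Set.Ioi (0:ℝ)) fun x : ℝ => x⁻¹ := by
    simpa using hzpow
  have haff : ConvexOn ℝ ((AffineMap.lineMap (e : ℝ) (e + d)) ⁻¹' (Set.Ioi 0))
      ((fun x : ℝ => x⁻¹) ∘ (AffineMap.lineMap (e : ℝ) (e + d))) :=
    hinv.comp_affineMap _
  have hsub : Set.Ici (0:ℝ) ⊆ (AffineMap.lineMap (e : ℝ) (e + d)) ⁻¹' (Set.Ioi 0) := by
    intro x hx
    simp only [Set.mem_preimage, AffineMap.lineMap_apply_module, Set.mem_Ioi,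
      smul_eq_mul]
    nlinarith [Set.mem_Ici.mp hx]
  have := (haff.subset hsub (convex_Ici 0))
  refine this.congr fun x hx => ?_
  simp [AffineMap.lineMap_apply_module, smul_eq_mul]
  ring_nf

/-- Proposition 2: the objective of Problem P1-E is convex on the
nonnegative orthant. -/
theorem problem_P1E_convex
    (K : ℕ) (hK : 1 ≤ K) (ϖ L c R fl : Fin K → ℝ)
    (hϖ : ∀ k, 0 < ϖ k) (hL : ∀ k, 0 < L k) (hc : ∀ k, 0 < c k)
    (hR : ∀ k, 0 < R k) (hfl : ∀ k, 0 < fl k) :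
    ConvexOn ℝ {f : Fin K → ℝ | ∀ k, 0 ≤ f k}
      (fun f : Fin K → ℝ => ∑ k, ϖ k * (L k * (c k) ^ 2 * R k + L k * c k * f k) /
        (f k * fl k + c k * R k * (f k + fl k))) := by
  -- abbreviations
  set d : Fin K → ℝ := fun k => fl k + c k * R k with hd
  set e : Fin K → ℝ := fun k => c k * R k * fl k with he
  set P : Fin K → ℝ := fun k => ϖ k * (L k * c k) / d k with hP
  set Q : Fin K → ℝ := fun k => ϖ k * L k * (c k) ^ 2 * R k * (c k * R k) / d k with hQ
  have hdpos : ∀ k, 0 < d k := fun k => by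
    have := hfl k; have := hc k; have := hR k; positivity
  have hepos : ∀ k, 0 < e k := fun k => by
    have := hfl k; have := hc k; have := hR k; positivity
  have hQpos : ∀ k, 0 ≤ Q k := fun k => by
    have := hϖ k; have := hL k; have := hc k; have := hR k; have := hdpos k
    positivity
  -- the set is convex
  have hSconv : Convex ℝ {f : Fin K → ℝ | ∀ k, 0 ≤ f k} := by
    have : {f : Fin K → ℝ | ∀ k, 0 ≤ f k} = Set.pi Set.univ (fun _ => Set.Ici (0:ℝ)) := by
      ext f; simp [Set.mem_pi, Pi.le_def]
    rw [this]
    exact convex_pi fun k _ => convex_Ici 0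
  -- convexity of each term as function on ℝ^K
  have hterm : ∀ k : Fin K, ConvexOn ℝ {f : Fin K → ℝ | ∀ j, 0 ≤ f j}
      (fun f : Fin K → ℝ => P k + Q k * (d k * f k + e k)⁻¹) := by
    intro k
    have h1 : ConvexOn ℝ (Set.Ici (0:ℝ))
        (fun x : ℝ => P k + Q k * (d k * x + e k)⁻¹) := by
      have := ((convexOn_inv_affine (hdpos k) (hepos k)).smul (hQpos k)).add_const (P k)
      exact this.congr fun x _ => by simp [smul_eq_mul]; ring
    have h2 := h1.comp_linearMap (LinearMap.proj k : (Fin K → ℝ) →ₗ[ℝ] ℝ)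
    refine h2.subset ?_ hSconv
    intro f hf
    exact hf k
  have hsum := convexOn_sum_fun Finset.univ hSconv
      (fun k (f : Fin K → ℝ) => P k + Q k * (d k * f k + e k)⁻¹)
      (fun k _ => hterm k)
  refine hsum.congr fun f hf => ?_
  refine Finset.sum_congr rfl fun k _ => ?_
  have hfk : 0 ≤ f k := hf k
  have hden : f k * fl k + c k * R k * (f k + fl k) = d k * f k + e k := by
    simp only [hd, he]; ring
  have hdenpos : 0 < d k * f k + e k := by
    have := hdpos k; have := hepos k; nlinarith
  rw [eq_comm, hden, div_eq_iff hdenpos.ne']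
  have hdk := (hdpos k).ne'
  rw [add_mul, mul_assoc (Q k), inv_mul_cancel₀ hdenpos.ne', mul_one, hP, hQ]
  field_simp
  ring
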